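/- Let A be a real m × n matrix with n = 2^(2^m) + 1 columns. Then there exist column indices j_1 < j_2 < j_3 such that for every row i, the triple (A_{i,j_1}, A_{i,j_2}, A_{i,j_3}) is monotonic (i.e., either A_{i,j_1} ≤ A_{i,j_2} ≤ A_{i,j_3} or A_{i,j_1} ≥ A_{i,j_2} ≥ A_{i,j_3}). -/

import Mathlib

open Function Finset
theorem my_erdos_szekeres {α : Type*} [LinearOrder α] {r s n : ℕ} {f : Fin n → α} (hn : r * s < n) (hf : Injective f) :
    (∃ t : Finset (Fin n), r < #t ∧ StrictMonoOn f ↑t) ∨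
      ∃ t : Finset (Fin n), s < #t ∧ StrictAntiOn f ↑t := by
  -- Given an index `i`, produce the set of increasing (resp., decreasing) subsequences which ends
  -- at `i`.
  let inc_sequences_ending_in : Fin n → Finset (Finset (Fin n)) := fun i =>
    univ.powerset.filter fun t => Finset.max t = i ∧ StrictMonoOn f ↑t
  let dec_sequences_ending_in : Fin n → Finset (Finset (Fin n)) := fun i =>
    univ.powerset.filter fun t => Finset.max t = i ∧ StrictAntiOn f ↑t
  -- The singleton sequence is in both of the above collections.
  -- (This is useful to show that the maximum length subsequence is at least 1, and that the set
  -- of subsequences is nonempty.)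
  have inc_i : ∀ i, {i} ∈ inc_sequences_ending_in i := fun i => by
    simp [inc_sequences_ending_in, StrictMonoOn]
  have dec_i : ∀ i, {i} ∈ dec_sequences_ending_in i := fun i => by
    simp [dec_sequences_ending_in, StrictAntiOn]
  -- Define the pair of labels: at index `i`, the pair is the maximum length of an increasing
  -- subsequence ending at `i`, paired with the maximum length of a decreasing subsequence ending
  -- at `i`.
  -- We call these labels `(a_i, b_i)`.
  let ab' : Fin n → ℕ × ℕ := by
    intro i
    apply
      (max' ((inc_sequences_ending_in i).image card) (Nonempty.image ⟨{i}, inc_i i⟩ _),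
        max' ((dec_sequences_ending_in i).image card) (Nonempty.image ⟨{i}, dec_i i⟩ _))
  -- Porting note: it costs many resources to unfold `ab'` so we obscure the definition:
  generalize hab : ab' = ab
  -- It now suffices to show that one of the labels is 'big' somewhere. In particular, if the
  -- first in the pair is more than `r` somewhere, then we have an increasing subsequence in our
  -- set, and if the second is more than `s` somewhere, then we have a decreasing subsequence.
  rsuffices ⟨i, hi⟩ : ∃ i, r < (ab i).1 ∨ s < (ab i).2
  · refine Or.imp ?_ ?_ hi
    on_goal 1 =>
      have : (ab i).1 ∈ image card (inc_sequences_ending_in i) := by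
        simp only [← hab]; exact max'_mem _ (Nonempty.image ⟨{i}, inc_i i⟩ _)
    on_goal 2 =>
      have : (ab i).2 ∈ image card (dec_sequences_ending_in i) := by
        simp only [← hab]; exact max'_mem _ (Nonempty.image ⟨{i}, dec_i i⟩ _)
    all_goals
      intro hi
      rw [mem_image] at this
      obtain ⟨t, ht₁, ht₂⟩ := this
      refine ⟨t, by rwa [ht₂], ?_⟩
      rw [mem_filter] at ht₁
      apply ht₁.2.2
  -- Show first that the pair of labels is unique.
  have : Injective ab := by
    simp only [← hab]
    apply Function.Injective.of_lt_imp_ne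
    intro i j k q
    injection q with q₁ q₂
    -- We have two cases: `f i < f j` or `f j < f i`.
    -- In the former we'll show `a_i < a_j`, and in the latter we'll show `b_i < b_j`.
    cases lt_or_gt_of_ne fun _ => ne_of_lt ‹i < j› (hf ‹f i = f j›)
    on_goal 1 =>
      apply ne_of_lt _ q₁
      have : (ab' i).1 ∈ image card (inc_sequences_ending_in i) := by exact max'_mem _ (Nonempty.image ⟨{i}, inc_i i⟩ _)
    on_goal 2 =>
      apply ne_of_lt _ q₂
      have : (ab' i).2 ∈ image card (dec_sequences_ending_in i) := by exact max'_mem _ (Nonempty.image ⟨{i}, dec_i i⟩ _)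
    all_goals
      -- Reduce to showing there is a subsequence of length `a_i + 1` which ends at `j`.
      rw [Nat.lt_iff_add_one_le]
      apply le_max'
      rw [mem_image] at this ⊢
      -- In particular we take the subsequence `t` of length `a_i` which ends at `i`, by definition
      -- of `a_i`
      rcases this with ⟨t, ht₁, ht₂⟩
      rw [mem_filter] at ht₁
      -- Ensure `t` ends at `i`.
      have : t.max = i := by simp only [ht₁.2.1]
      -- Now our new subsequence is given by adding `j` at the end of `t`.
      refine ⟨insert j t, ?_, ?_⟩
      -- First make sure it's valid, i.e., that this subsequence ends at `j` and is increasing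
      · rw [mem_filter]
        refine ⟨?_, ?_, ?_⟩
        · rw [mem_powerset]; apply subset_univ
        -- It ends at `j` since `i < j`.
        · convert max_insert (a := j) (s := t)
          rw [ht₁.2.1, max_eq_left]
          apply WithBot.coe_le_coe.mpr (le_of_lt ‹i < j›)
        -- To show it's increasing (i.e., `f` is monotone increasing on `t.insert j`), we do cases
        -- on what the possibilities could be - either in `t` or equals `j`.
        simp only [StrictMonoOn, StrictAntiOn, coe_insert, Set.mem_insert_iff, mem_coe]
        -- Most of the cases are just bashes.
        rintro x ⟨rfl | _⟩ y ⟨rfl | _⟩ _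
        · apply (irrefl _ ‹j < j›).elim
        · exfalso
          apply not_le_of_gt (_root_.trans ‹i < j› ‹j < y›) (le_max_of_eq ‹y ∈ t› ‹t.max = i›)
        · first
          | apply lt_of_le_of_lt _ ‹f i < f j›
          | apply lt_of_lt_of_le ‹f j < f i› _
          rcases lt_or_eq_of_le (le_max_of_eq ‹x ∈ t› ‹t.max = i›) with (_ | rfl)
          · apply le_of_lt (ht₁.2.2 ‹x ∈ t› (mem_of_max ‹t.max = i›) ‹x < i›)
          · rfl
        · apply ht₁.2.2 ‹x ∈ t› ‹y ∈ t› ‹x < y›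
      -- Finally show that this new subsequence is one longer than the old one.
      · rw [card_insert_of_notMem, ht₂]
        intro
        apply not_le_of_gt ‹i < j› (le_max_of_eq ‹j ∈ t› ‹t.max = i›)
  -- Finished both goals!
  -- Now that we have uniqueness of each label, it remains to do some counting to finish off.
  -- Suppose all the labels are small.
  by_contra! q
  -- Then the labels `(a_i, b_i)` all fit in the following set: `{ (x,y) | 1 ≤ x ≤ r, 1 ≤ y ≤ s }`
  let ran : Finset (ℕ × ℕ) := (range r).image Nat.succ ×ˢ (range s).image Nat.succ
  -- which we prove here.
  have : image ab univ ⊆ ran := by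
    -- First some logical shuffling
    rintro ⟨x₁, x₂⟩
    simp only [ran, mem_image, exists_prop, mem_range, mem_univ, mem_product, true_and,
      Prod.ext_iff]
    rintro ⟨i, rfl, rfl⟩
    specialize q i
    -- Show `1 ≤ a_i` and `1 ≤ b_i`, which is easy from the fact that `{i}` is an increasing and
    -- decreasing subsequence which we did right near the top.
    have z : 1 ≤ (ab i).1 ∧ 1 ≤ (ab i).2 := by
      simp only [← hab]
      constructor <;>
        · apply le_max'
          rw [mem_image]
          exact ⟨{i}, by solve_by_elim, card_singleton i⟩
    -- Need to get `a_i ≤ r`, here phrased as: there is some `a < r` with `a+1 = a_i`.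
    exact ⟨⟨(ab i).1 - 1, by omega⟩, (ab i).2 - 1, by omega⟩
  -- To get our contradiction, it suffices to prove `n ≤ r * s`
  apply not_le_of_gt hn
  -- Which follows from considering the cardinalities of the subset above, since `ab` is injective.
  simpa [ran, Nat.succ_injective, card_image_of_injective, ‹Injective ab›] using card_le_card this


/-- Erdős–Szekeres for possibly non-injective real sequences, phrased via a strictly
monotone reindexing. -/
theorem es_mono {K n : ℕ} (hn : K * K < n) (f : Fin n → ℝ) :
    ∃ g : Fin (K + 1) → Fin n, StrictMono g ∧
      (Monotone (f ∘ g) ∨ Antitone (f ∘ g)) := by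
  classical
  set F : Fin n → ℝ ×ₗ ℝ := fun i => toLex (f i, (i : ℝ)) with hF
  have hFinj : Injective F := by
    intro i j h
    have h' : (f i, (i : ℝ)) = (f j, (j : ℝ)) := congrArg ofLex h
    have : ((i : ℕ) : ℝ) = ((j : ℕ) : ℝ) := congrArg Prod.snd h'
    exact Fin.ext (Nat.cast_injective this)
  have key : ∀ (t : Finset (Fin n)), K < #t →
      ∃ g : Fin (K + 1) → Fin n, StrictMono g ∧ ∀ a, g a ∈ t ∧
        ∀ b, a < b → g a < g b := by
    intro t ht
    have hc : K + 1 ≤ #t := ht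
    let e := t.orderIsoOfFin rfl
    refine ⟨fun a => (e (Fin.castLE hc a) : Fin n), ?_, ?_⟩
    · intro a b hab
      exact e.strictMono (by exact hab)
    · intro a
      refine ⟨(e (Fin.castLE hc a)).2, fun b hab => e.strictMono (by exact hab)⟩
  rcases my_erdos_szekeres (r := K) (s := K) hn hFinj with ⟨t, ht, hm⟩ | ⟨t, ht, hm⟩
  · obtain ⟨g, hg, hgt⟩ := key t ht
    refine ⟨g, hg, Or.inl ?_⟩
    intro a b hab
    rcases eq_or_lt_of_le hab with rfl | hab
    · exact le_rfl
    have : F (g a) < F (g b) := hm (hgt a).1 (hgt b).1 (hg hab)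
    rcases Prod.Lex.lt_iff.1 this with h | h
    · exact h.le
    · exact h.1.le
  · obtain ⟨g, hg, hgt⟩ := key t ht
    refine ⟨g, hg, Or.inr ?_⟩
    intro a b hab
    rcases eq_or_lt_of_le hab with rfl | hab
    · exact le_rfl
    have : F (g b) < F (g a) := hm (hgt a).1 (hgt b).1 (hg hab)
    rcases Prod.Lex.lt_iff.1 this with h | h
    · exact h.le
    · exact h.1.le

theorem de_bruijn_monotone_columns (m : ℕ) (A : Fin m → Fin (2 ^ 2 ^ m + 1) → ℝ) :
    ∃ j₁ j₂ j₃ : Fin (2 ^ 2 ^ m + 1), j₁ < j₂ ∧ j₂ < j₃ ∧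
      ∀ i : Fin m, (A i j₁ ≤ A i j₂ ∧ A i j₂ ≤ A i j₃) ∨
        (A i j₂ ≤ A i j₁ ∧ A i j₃ ≤ A i j₂) := by
  induction m with
  | zero =>
      exact ⟨⟨0, by norm_num⟩, ⟨1, by norm_num⟩, ⟨2, by norm_num⟩,
        by decide, by decide, fun i => i.elim0⟩
  | succ m ih =>
      set K := 2 ^ 2 ^ m with hK
      have hn : K * K < 2 ^ 2 ^ (m + 1) + 1 := by
        have : K * K = 2 ^ 2 ^ (m + 1) := by
          rw [hK, ← pow_add, pow_succ, mul_two]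
        omega
      obtain ⟨g, hg, hmono⟩ := es_mono hn (A 0)
      obtain ⟨k₁, k₂, k₃, hk12, hk23, hrows⟩ := ih (fun i k => A i.succ (g k))
      refine ⟨g k₁, g k₂, g k₃, hg hk12, hg hk23, ?_⟩
      intro i
      refine Fin.cases ?_ ?_ i
      · rcases hmono with h | h
        · exact Or.inl ⟨h hk12.le, h hk23.le⟩
        · exact Or.inr ⟨h hk12.le, h hk23.le⟩
      · intro i'
        exact hrows i'
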